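/- For Jσ, Jτ, Jστ ∈ ℝ define a0 = e^{−2(Jσ+Jτ)}, aσ = e^{−2Jτ}(e^{−2Jστ} − e^{−2Jσ}), aτ = e^{−2Jσ}(e^{−2Jστ} − e^{−2Jτ}), aστ = 1 − e^{−2(Jσ+Jστ)} − e^{−2(Jτ+Jστ)} + e^{−2(Jσ+Jτ)}. Then a0 + aσ + aτ + aστ = 1, a0 > 0, and the four numbers a0, aσ, aτ, aστ are all nonnegative (hence define a probability distribution on {0,1}×{0,1}) if and only if Jσ ≥ Jστ, Jτ ≥ Jστ and tanh Jστ ≥ − tanh Jσ · tanh Jτ. -/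
import Mathlib

lemma tanh_aux (x : ℝ) :
    Real.tanh x = (1 - Real.exp (-2 * x)) / (1 + Real.exp (-2 * x)) := by
  rw [Real.tanh_eq_sinh_div_cosh, Real.sinh_eq, Real.cosh_eq]
  have h1 : Real.exp x ≠ 0 := (Real.exp_pos x).ne'
  have h2 : (0:ℝ) < 1 + Real.exp (-2 * x) := by positivity
  have h3 : (0:ℝ) < Real.exp x + Real.exp (-x) := by positivity
  have e1 : Real.exp (-2 * x) = Real.exp (-x) * Real.exp (-x) := by
    rw [← Real.exp_add]; ring_nf
  have e2 : Real.exp x * Real.exp (-x) = 1 := by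
    rw [← Real.exp_add]; simp
  have hst : (Real.exp x - Real.exp (-x)) / 2 / ((Real.exp x + Real.exp (-x)) / 2)
      = (Real.exp x - Real.exp (-x)) / (Real.exp x + Real.exp (-x)) := by
    field_simp
  rw [hst, div_eq_div_iff h3.ne' h2.ne', e1]
  linear_combination (2 * Real.exp (-x)) * e2

/-- The random-cluster weights `a0, aσ, aτ, aστ` of the Ashkin–Teller model
sum to 1, `a0 > 0`, and they are all nonnegative iff `Jσ ≥ Jστ`, `Jτ ≥ Jστ` and
`tanh Jστ ≥ -tanh Jσ · tanh Jτ`. -/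
theorem stmt5 (Jσ Jτ Jστ : ℝ)
    (a0 aσ aτ aστ : ℝ)
    (ha0 : a0 = Real.exp (-2 * (Jσ + Jτ)))
    (haσ : aσ = Real.exp (-2 * Jτ) * (Real.exp (-2 * Jστ) - Real.exp (-2 * Jσ)))
    (haτ : aτ = Real.exp (-2 * Jσ) * (Real.exp (-2 * Jστ) - Real.exp (-2 * Jτ)))
    (haστ : aστ = 1 - Real.exp (-2 * (Jσ + Jστ)) - Real.exp (-2 * (Jτ + Jστ)) +
        Real.exp (-2 * (Jσ + Jτ))) :
    a0 + aσ + aτ + aστ = 1 ∧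
    0 < a0 ∧
    ((0 ≤ a0 ∧ 0 ≤ aσ ∧ 0 ≤ aτ ∧ 0 ≤ aστ) ↔
      (Jσ ≥ Jστ ∧ Jτ ≥ Jστ ∧
        Real.tanh Jστ ≥ -(Real.tanh Jσ * Real.tanh Jτ))) := by
  set u := Real.exp (-2 * Jσ) with hu
  set v := Real.exp (-2 * Jτ) with hv
  set w := Real.exp (-2 * Jστ) with hw
  have hu0 : 0 < u := Real.exp_pos _
  have hv0 : 0 < v := Real.exp_pos _
  have hw0 : 0 < w := Real.exp_pos _
  have euv : Real.exp (-2 * (Jσ + Jτ)) = u * v := by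
    rw [hu, hv, ← Real.exp_add]; ring_nf
  have euw : Real.exp (-2 * (Jσ + Jστ)) = u * w := by
    rw [hu, hw, ← Real.exp_add]; ring_nf
  have evw : Real.exp (-2 * (Jτ + Jστ)) = v * w := by
    rw [hv, hw, ← Real.exp_add]; ring_nf
  rw [euv] at ha0 haστ
  rw [euw, evw] at haστ
  refine ⟨by rw [ha0, haσ, haτ, haστ]; ring, by rw [ha0]; positivity, ?_⟩
  have h1 : (0 ≤ aσ ↔ Jσ ≥ Jστ) := by
    rw [haσ, ge_iff_le]
    constructor
    · intro h
      have : u ≤ w := by nlinarith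
      have h2 : Real.exp (-2 * Jσ) ≤ Real.exp (-2 * Jστ) := this
      have := Real.exp_le_exp.mp h2
      linarith
    · intro h
      have : u ≤ w := Real.exp_le_exp.mpr (by linarith)
      nlinarith
  have h2 : (0 ≤ aτ ↔ Jτ ≥ Jστ) := by
    rw [haτ, ge_iff_le]
    constructor
    · intro h
      have : v ≤ w := by nlinarith
      have h2' : Real.exp (-2 * Jτ) ≤ Real.exp (-2 * Jστ) := this
      have := Real.exp_le_exp.mp h2'
      linarith
    · intro h
      have : v ≤ w := Real.exp_le_exp.mpr (by linarith)
      nlinarith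
  have h3 : (0 ≤ aστ ↔ Real.tanh Jστ ≥ -(Real.tanh Jσ * Real.tanh Jτ)) := by
    rw [haστ, tanh_aux, tanh_aux, tanh_aux, ← hu, ← hv, ← hw, ge_iff_le,
      div_mul_div_comm, ← neg_div]
    have hu1 : (0:ℝ) < 1 + u := by linarith
    have hv1 : (0:ℝ) < 1 + v := by linarith
    have hw1 : (0:ℝ) < 1 + w := by linarith
    rw [div_le_div_iff₀ (by positivity) hw1]
    constructor <;> intro h <;> nlinarith
  constructor
  · rintro ⟨-, hs, ht, hst⟩
    exact ⟨h1.mp hs, h2.mp ht, h3.mp hst⟩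
  · rintro ⟨hs, ht, hst⟩
    exact ⟨by rw [ha0]; positivity, h1.mpr hs, h2.mpr ht, h3.mpr hst⟩
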